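/- (Third-order Taylor bound against the odd Gaussian kernel derivative) Let G : ℝ → ℝ be bounded and three times continuously differentiable with |G′′′(x)| ≤ M for all x ∈ ℝ, for some finite constant M. Then for every t ∈ ℝ and every h > 0, | ∫_ℝ G(t − h z) φ′(z) dz − h G′(t) | ≤ M h³ / 2, where φ′(z) = −z φ(z) is the derivative of the standard normal density. -/

import Mathlib

open MeasureTheory ProbabilityTheory Filter Set Topology

/-- The standard normal density φ. -/
noncomputable def gaussPdf (x : ℝ) : ℝ := (Real.sqrt (2 * Real.pi))⁻¹ * Real.exp (-(x ^ 2) / 2)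

/-- The standard normal cdf Φ. -/
noncomputable def gaussCdf (x : ℝ) : ℝ := ∫ t in Set.Iio x, gaussPdf t

/-- The probit function Φ⁻¹ (the standard normal quantile function). -/
noncomputable def probit : ℝ → ℝ := Function.invFun gaussCdf

/-- First partial derivative of a function of two real variables. -/
noncomputable def pderiv₁ (f : ℝ → ℝ → ℝ) (u v : ℝ) : ℝ := deriv (fun w => f w v) u

/-- Second partial derivative of a function of two real variables. -/
noncomputable def pderiv₂ (f : ℝ → ℝ → ℝ) (u v : ℝ) : ℝ := deriv (fun w => f u w) v

/-- The density of the probit-transformed vector: f_ST(s,t) = c(Φ(s),Φ(t))φ(s)φ(t). -/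
noncomputable def fST (c : ℝ → ℝ → ℝ) (s t : ℝ) : ℝ :=
  c (gaussCdf s) (gaussCdf t) * gaussPdf s * gaussPdf t

/-- `C` is a (bivariate) copula with density `c`. -/
structure IsCopulaWithDensity (C c : ℝ → ℝ → ℝ) : Prop where
  grounded₁ : ∀ u ∈ Set.Icc (0:ℝ) 1, C u 0 = 0
  grounded₂ : ∀ v ∈ Set.Icc (0:ℝ) 1, C 0 v = 0
  margin₁ : ∀ u ∈ Set.Icc (0:ℝ) 1, C u 1 = u
  margin₂ : ∀ v ∈ Set.Icc (0:ℝ) 1, C 1 v = v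
  twoIncr : ∀ u₁ u₂ v₁ v₂ : ℝ, u₁ ∈ Set.Icc (0:ℝ) 1 → u₂ ∈ Set.Icc (0:ℝ) 1 →
    v₁ ∈ Set.Icc (0:ℝ) 1 → v₂ ∈ Set.Icc (0:ℝ) 1 → u₁ ≤ u₂ → v₁ ≤ v₂ →
    0 ≤ C u₂ v₂ - C u₁ v₂ - C u₂ v₁ + C u₁ v₁
  density_eq : ∀ u ∈ Set.Icc (0:ℝ) 1, ∀ v ∈ Set.Icc (0:ℝ) 1,
    C u v = ∫ x in (0:ℝ)..u, ∫ y in (0:ℝ)..v, c x y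

/-- Assumption 2 of the paper. -/
structure Assumption2 (C : ℝ → ℝ → ℝ) : Prop where
  diff_u : ∀ u v : ℝ, u ∈ Set.Ioo (0:ℝ) 1 → v ∈ Set.Icc (0:ℝ) 1 →
    DifferentiableAt ℝ (fun w => C w v) u
  diff_uu : ∀ u v : ℝ, u ∈ Set.Ioo (0:ℝ) 1 → v ∈ Set.Icc (0:ℝ) 1 →
    DifferentiableAt ℝ (fun w => pderiv₁ C w v) u
  cont_u : ContinuousOn (fun p : ℝ × ℝ => pderiv₁ C p.1 p.2)
    (Set.Ioo (0:ℝ) 1 ×ˢ Set.Icc (0:ℝ) 1)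
  cont_uu : ContinuousOn (fun p : ℝ × ℝ => pderiv₁ (pderiv₁ C) p.1 p.2)
    (Set.Ioo (0:ℝ) 1 ×ˢ Set.Icc (0:ℝ) 1)
  bound_uu : ∃ K₁ : ℝ, ∀ u v : ℝ, u ∈ Set.Ioo (0:ℝ) 1 → v ∈ Set.Icc (0:ℝ) 1 →
    |pderiv₁ (pderiv₁ C) u v| ≤ K₁ / (u * (1 - u))
  diff_v : ∀ u v : ℝ, u ∈ Set.Icc (0:ℝ) 1 → v ∈ Set.Ioo (0:ℝ) 1 →
    DifferentiableAt ℝ (fun w => C u w) v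
  diff_vv : ∀ u v : ℝ, u ∈ Set.Icc (0:ℝ) 1 → v ∈ Set.Ioo (0:ℝ) 1 →
    DifferentiableAt ℝ (fun w => pderiv₂ C u w) v
  cont_v : ContinuousOn (fun p : ℝ × ℝ => pderiv₂ C p.1 p.2)
    (Set.Icc (0:ℝ) 1 ×ˢ Set.Ioo (0:ℝ) 1)
  cont_vv : ContinuousOn (fun p : ℝ × ℝ => pderiv₂ (pderiv₂ C) p.1 p.2)
    (Set.Icc (0:ℝ) 1 ×ˢ Set.Ioo (0:ℝ) 1)
  bound_vv : ∃ K₂ : ℝ, ∀ u v : ℝ, u ∈ Set.Icc (0:ℝ) 1 → v ∈ Set.Ioo (0:ℝ) 1 →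
    |pderiv₂ (pderiv₂ C) u v| ≤ K₂ / (v * (1 - v))

/-- Assumption 3 of the paper. -/
structure Assumption3 (c : ℝ → ℝ → ℝ) : Prop where
  pos : ∀ u v : ℝ, u ∈ Set.Ioo (0:ℝ) 1 → v ∈ Set.Ioo (0:ℝ) 1 → 0 < c u v
  smooth : ContDiffOn ℝ 2 (fun p : ℝ × ℝ => c p.1 p.2) (Set.Ioo (0:ℝ) 1 ×ˢ Set.Ioo (0:ℝ) 1)
  bound : ∃ K₀₀ : ℝ, ∀ u v : ℝ, u ∈ Set.Ioo (0:ℝ) 1 → v ∈ Set.Ioo (0:ℝ) 1 →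
    c u v ≤ K₀₀ * min (1 / (u * (1 - u))) (1 / (v * (1 - v)))

/-- Assumption 1 of the paper, together with the i.i.d. sampling scheme and Sklar's relation:
`μ` is the common joint law of the i.i.d. pairs `(X i, Y i)`, `FX` and `FY` are the marginal
cdfs (strictly increasing on their supports), `μ` is absolutely continuous, and `C` is the
copula of the joint distribution. -/
structure SamplingHyp {Ω : Type*} [MeasurableSpace Ω] (P : Measure Ω)
    (X Y : ℕ → Ω → ℝ) (μ : Measure (ℝ × ℝ)) (FX FY : ℝ → ℝ) (C : ℝ → ℝ → ℝ) : Prop where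
  meas_X : ∀ i, Measurable (X i)
  meas_Y : ∀ i, Measurable (Y i)
  indep : iIndepFun (fun i ω => (X i ω, Y i ω)) P
  ident : ∀ i, Measure.map (fun ω => (X i ω, Y i ω)) P = μ
  prob : IsProbabilityMeasure μ
  absCont : μ ≪ (volume : Measure (ℝ × ℝ))
  FX_def : ∀ x, FX x = (μ (Set.Iic x ×ˢ Set.univ)).toReal
  FY_def : ∀ y, FY y = (μ (Set.univ ×ˢ Set.Iic y)).toReal
  FX_mono : StrictMonoOn FX {x | 0 < FX x ∧ FX x < 1}
  FY_mono : StrictMonoOn FY {y | 0 < FY y ∧ FY y < 1}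
  sklar : ∀ x y, (μ (Set.Iic x ×ˢ Set.Iic y)).toReal = C (FX x) (FY y)

/-- The empirical cdf of the first `n` observations of `Z`. -/
noncomputable def empCdf {Ω : Type*} (Z : ℕ → Ω → ℝ) (n : ℕ) (ω : Ω) (x : ℝ) : ℝ :=
  (n : ℝ)⁻¹ * ∑ j ∈ Finset.range n, if Z j ω ≤ x then (1:ℝ) else 0

/-- The probit-transformed pseudo-observation Ŝ_i = Φ⁻¹((n/(n+1)) F̂_n(Z_i)). -/
noncomputable def pseudoProbit {Ω : Type*} (Z : ℕ → Ω → ℝ) (n i : ℕ) (ω : Ω) : ℝ :=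
  probit ((n : ℝ) / ((n : ℝ) + 1) * empCdf Z n ω (Z i ω))

/-- The feasible kernel density estimator of f_ST based on the pseudo-observations. -/
noncomputable def fhatST {Ω : Type*} (X Y : ℕ → Ω → ℝ) (h : ℕ → ℝ) (n : ℕ)
    (s t : ℝ) (ω : Ω) : ℝ :=
  ((n : ℝ) * h n ^ 2)⁻¹ * ∑ i ∈ Finset.range n,
    gaussPdf ((s - pseudoProbit X n i ω) / h n) * gaussPdf ((t - pseudoProbit Y n i ω) / h n)

/-- The ideal kernel density estimator of f_ST based on the true uniformized observations. -/
noncomputable def fstarST {Ω : Type*} (FX FY : ℝ → ℝ) (X Y : ℕ → Ω → ℝ) (h : ℕ → ℝ) (n : ℕ)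
    (s t : ℝ) (ω : Ω) : ℝ :=
  ((n : ℝ) * h n ^ 2)⁻¹ * ∑ i ∈ Finset.range n,
    gaussPdf ((s - probit (FX (X i ω))) / h n) * gaussPdf ((t - probit (FY (Y i ω))) / h n)

/-- The naive probit-transformation kernel copula density estimator. -/
noncomputable def chatTau {Ω : Type*} (X Y : ℕ → Ω → ℝ) (h : ℕ → ℝ) (n : ℕ)
    (u v : ℝ) (ω : Ω) : ℝ :=
  fhatST X Y h n (probit u) (probit v) ω / (gaussPdf (probit u) * gaussPdf (probit v))

/-- Convergence in distribution of real random variables to the law `ν`: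
weak convergence of the laws tested against bounded continuous functions. -/
def TendstoInDistribution {Ω : Type*} [MeasurableSpace Ω] (P : Measure Ω)
    (Z : ℕ → Ω → ℝ) (ν : Measure ℝ) : Prop :=
  ∀ f : BoundedContinuousFunction ℝ ℝ,
    Filter.Tendsto (fun n => ∫ ω, f (Z n ω) ∂P) Filter.atTop (𝓝 (∫ x, f x ∂ν))

/-- The bandwidth condition: h_n ~ n^{-a} for some a ∈ (0, amax), i.e. n^a h_n → L > 0. -/
def BandwidthCond (h : ℕ → ℝ) (amax : ℝ) : Prop :=
  (∀ n, 0 < h n) ∧ ∃ a ∈ Set.Ioo (0:ℝ) amax, ∃ L > (0:ℝ),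
    Filter.Tendsto (fun n : ℕ => (n : ℝ) ^ a * h n) Filter.atTop (𝓝 L)

lemma gaussPdf_pos (x : ℝ) : 0 < gaussPdf x := by
  have : 0 < Real.sqrt (2 * Real.pi) := Real.sqrt_pos.2 (by positivity)
  exact mul_pos (inv_pos.2 this) (Real.exp_pos _)

lemma hasDerivAt_gaussPdf (x : ℝ) : HasDerivAt gaussPdf (-(x * gaussPdf x)) x := by
  have h1 : HasDerivAt (fun y : ℝ => -(y ^ 2) / 2) (-x) x := by
    have := ((hasDerivAt_pow 2 x).neg).div_const 2
    exact this.congr_deriv (by push_cast; ring)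
  have h2 := (h1.exp).const_mul (Real.sqrt (2 * Real.pi))⁻¹
  exact h2.congr_deriv (by simp only [gaussPdf]; ring)

lemma deriv_gaussPdf : deriv gaussPdf = fun x => -(x * gaussPdf x) :=
  funext fun x => (hasDerivAt_gaussPdf x).deriv

lemma continuous_gaussPdf : Continuous gaussPdf := by
  unfold gaussPdf; fun_prop

/-- Integrability of `z^n * gaussPdf z`. -/
lemma integrable_pow_gaussPdf (n : ℕ) : Integrable (fun z : ℝ => z ^ n * gaussPdf z) := by
  have h := (integrable_rpow_mul_exp_neg_mul_sq (b := 1/2) (by norm_num)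
    (s := (n : ℝ)) (lt_of_lt_of_le (by norm_num) (Nat.cast_nonneg n))).const_mul
    (Real.sqrt (2 * Real.pi))⁻¹
  exact h.congr (Eventually.of_forall fun x => by
    simp only [Real.rpow_natCast, gaussPdf]; ring)

lemma tendsto_pow_gaussPdf_atTop (n : ℕ) :
    Tendsto (fun z : ℝ => z ^ n * gaussPdf z) atTop (𝓝 0) := by
  have h := (rpow_mul_exp_neg_mul_sq_isLittleO_exp_neg (b := 1/2) (by norm_num)
    (n : ℝ)).trans_tendsto (by
      have h2 : Tendsto (fun x : ℝ => -((1/2) * x)) atTop atBot :=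
        tendsto_neg_atBot_iff.2 (Tendsto.const_mul_atTop (by norm_num) tendsto_id)
      have := Real.tendsto_exp_atBot.comp h2
      simpa [Function.comp_def, neg_mul] using this)
  have h3 := h.const_mul (Real.sqrt (2 * Real.pi))⁻¹
  rw [mul_zero] at h3
  exact h3.congr (fun x => by simp only [Real.rpow_natCast, gaussPdf]; ring)

lemma tendsto_pow_gaussPdf_atBot (n : ℕ) :
    Tendsto (fun z : ℝ => z ^ n * gaussPdf z) atBot (𝓝 0) := by
  have h := ((tendsto_pow_gaussPdf_atTop n).comp tendsto_neg_atBot_atTop).const_mul ((-1 : ℝ) ^ n)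
  rw [mul_zero] at h
  refine h.congr (fun x => ?_)
  have h1 : gaussPdf (-x) = gaussPdf x := by simp [gaussPdf, neg_sq]
  have h2 : (-x) ^ n = (-1) ^ n * x ^ n := by rw [neg_pow]
  have h3 : ((-1 : ℝ)) ^ n * (-1 : ℝ) ^ n = 1 := by
    rw [← mul_pow]; norm_num
  simp only [Function.comp_apply, h1, h2]
  calc (-1 : ℝ) ^ n * ((-1) ^ n * x ^ n * gaussPdf x)
      = ((-1 : ℝ) ^ n * (-1) ^ n) * (x ^ n * gaussPdf x) := by ring
    _ = x ^ n * gaussPdf x := by rw [h3, one_mul]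

lemma integral_gaussPdf : ∫ z : ℝ, gaussPdf z = 1 := by
  have h : ∫ z : ℝ, Real.exp (-(1/2) * z ^ 2) = Real.sqrt (Real.pi / (1/2)) :=
    integral_gaussian (1/2)
  have h2 : (∫ z : ℝ, gaussPdf z) = (Real.sqrt (2 * Real.pi))⁻¹ * ∫ z : ℝ,
      Real.exp (-(1/2) * z ^ 2) := by
    rw [← integral_const_mul]
    congr 1; funext z; simp only [gaussPdf]; ring_nf
  rw [h2, h]
  have h3 : Real.pi / (1/2) = 2 * Real.pi := by ring
  rw [h3, inv_mul_cancel₀ (ne_of_gt (Real.sqrt_pos.2 (by positivity)))]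

lemma integral_odd_pow_gaussPdf (k : ℕ) (hk : Odd k) :
    ∫ z : ℝ, z ^ k * gaussPdf z = 0 := by
  have h := MeasureTheory.integral_neg_eq_self (fun z : ℝ => z ^ k * gaussPdf z) volume
  have h2 : ∀ z : ℝ, (-z) ^ k * gaussPdf (-z) = -(z ^ k * gaussPdf z) := by
    intro z
    have : gaussPdf (-z) = gaussPdf z := by simp [gaussPdf, neg_sq]
    rw [this, hk.neg_pow]; ring
  simp only [h2] at h
  rw [integral_neg] at h
  linarith

lemma hasDerivAt_pow_mul_gaussPdf (k : ℕ) (z : ℝ) :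
    HasDerivAt (fun z : ℝ => z ^ (k+1) * gaussPdf z)
      (((k+1 : ℝ) * z ^ k - z ^ (k+2)) * gaussPdf z) z := by
  have h := (hasDerivAt_pow (k+1) z).mul (hasDerivAt_gaussPdf z)
  refine h.congr_deriv ?_
  push_cast
  ring

lemma integrable_deriv_pow_gauss (k : ℕ) :
    Integrable (fun z : ℝ => ((k+1 : ℝ) * z ^ k - z ^ (k+2)) * gaussPdf z) := by
  have h := ((integrable_pow_gaussPdf k).const_mul (k+1 : ℝ)).sub (integrable_pow_gaussPdf (k+2))
  exact h.congr (Eventually.of_forall fun z => by simp only [Pi.sub_apply]; ring)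

lemma moment_rec (k : ℕ) :
    ∫ z : ℝ, z ^ (k+2) * gaussPdf z = (k+1 : ℝ) * ∫ z : ℝ, z ^ k * gaussPdf z := by
  set f : ℝ → ℝ := fun z => z ^ (k+1) * gaussPdf z with hf
  set g : ℝ → ℝ := fun z => ((k+1 : ℝ) * z ^ k - z ^ (k+2)) * gaussPdf z with hg
  have hint : Integrable g := integrable_deriv_pow_gauss k
  have h1 : ∫ z in Iic (0:ℝ), g z = f 0 - 0 :=
    MeasureTheory.integral_Iic_of_hasDerivAt_of_tendsto'
      (fun z _ => hasDerivAt_pow_mul_gaussPdf k z) hint.integrableOn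
      (tendsto_pow_gaussPdf_atBot (k+1))
  have h2 : ∫ z in Ioi (0:ℝ), g z = 0 - f 0 :=
    MeasureTheory.integral_Ioi_of_hasDerivAt_of_tendsto'
      (fun z _ => hasDerivAt_pow_mul_gaussPdf k z) hint.integrableOn
      (tendsto_pow_gaussPdf_atTop (k+1))
  have h3 : ∫ z : ℝ, g z = 0 := by
    rw [← intervalIntegral.integral_Iic_add_Ioi hint.integrableOn hint.integrableOn, h1, h2]
    ring
  have h4 : ∫ z : ℝ, g z =
      ((k+1 : ℝ) * ∫ z : ℝ, z ^ k * gaussPdf z) - ∫ z : ℝ, z ^ (k+2) * gaussPdf z := by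
    rw [← integral_const_mul, ← integral_sub ((integrable_pow_gaussPdf k).const_mul _)
      (integrable_pow_gaussPdf (k+2))]
    congr 1; funext z; simp only [hg]; ring
  rw [h4] at h3
  linarith

lemma moment_two : ∫ z : ℝ, z ^ 2 * gaussPdf z = 1 := by
  have h := moment_rec 0
  simpa [integral_gaussPdf] using h

lemma moment_four : ∫ z : ℝ, z ^ 4 * gaussPdf z = 3 := by
  have h := moment_rec 2
  rw [show (2:ℕ)+2 = 4 from rfl, moment_two] at h
  norm_num at h
  exact h

/-- Integral step: if `|f| ≤ c|s-x|^k` and `F' = f`, then `|F y - F x| ≤ c|y-x|^(k+1)/(k+1)`. -/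
lemma taylor_step (F f : ℝ → ℝ) (hF : ∀ s, HasDerivAt F (f s) s) (hfc : Continuous f)
    (x c : ℝ) (k : ℕ) (hb : ∀ s, |f s| ≤ c * |s - x| ^ k) (y : ℝ) :
    |F y - F x| ≤ c * |y - x| ^ (k+1) / (k+1) := by
  have hFTC : ∀ a b : ℝ, ∫ s in a..b, f s = F b - F a := fun a b =>
    intervalIntegral.integral_eq_sub_of_hasDerivAt (fun s _ => hF s)
      (hfc.intervalIntegrable a b)
  rcases le_total x y with hxy | hxy
  · rw [← hFTC x y]
    calc |∫ s in x..y, f s| ≤ ∫ s in x..y, |f s| :=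
          intervalIntegral.abs_integral_le_integral_abs hxy
      _ ≤ ∫ s in x..y, c * (s - x) ^ k := by
          refine intervalIntegral.integral_mono_on hxy (hfc.abs.intervalIntegrable x y)
            (Continuous.intervalIntegrable (by continuity) x y) (fun s hs => ?_)
          have := hb s
          rwa [abs_of_nonneg (by linarith [hs.1] : (0:ℝ) ≤ s - x)] at this
      _ = c * ((y - x) ^ (k+1) / (k+1)) := by
          rw [intervalIntegral.integral_const_mul]
          congr 1
          have := intervalIntegral.integral_comp_sub_right (a := x) (b := y)
            (fun u : ℝ => u ^ k) x
          rw [this, sub_self, integral_pow]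
          simp
      _ = c * |y - x| ^ (k+1) / (k+1) := by
          rw [abs_of_nonneg (by linarith : (0:ℝ) ≤ y - x)]; ring
  · have : F y - F x = -(F x - F y) := by ring
    rw [this, abs_neg, ← hFTC y x]
    calc |∫ s in y..x, f s| ≤ ∫ s in y..x, |f s| :=
          intervalIntegral.abs_integral_le_integral_abs hxy
      _ ≤ ∫ s in y..x, c * (x - s) ^ k := by
          refine intervalIntegral.integral_mono_on hxy (hfc.abs.intervalIntegrable y x)
            (Continuous.intervalIntegrable (by continuity) y x) (fun s hs => ?_)
          have := hb s
          rwa [abs_sub_comm, abs_of_nonneg (by linarith [hs.2] : (0:ℝ) ≤ x - s)] at this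
      _ = c * ((x - y) ^ (k+1) / (k+1)) := by
          rw [intervalIntegral.integral_const_mul]
          congr 1
          have := intervalIntegral.integral_comp_sub_left (a := y) (b := x)
            (fun u : ℝ => u ^ k) x
          rw [this, sub_self, integral_pow]
          simp
      _ = c * |y - x| ^ (k+1) / (k+1) := by
          rw [abs_sub_comm, abs_of_nonneg (by linarith : (0:ℝ) ≤ x - y)]; ring

/-- Third-order Taylor pointwise bound. -/
lemma taylor3_bound (G : ℝ → ℝ) (hG : ContDiff ℝ 3 G) (M : ℝ)
    (hM : ∀ x, |iteratedDeriv 3 G x| ≤ M) (x y : ℝ) :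
    |G y - G x - deriv G x * (y - x) - deriv (deriv G) x * (y - x) ^ 2 / 2|
      ≤ M * |y - x| ^ 3 / 6 := by
  set g1 := deriv G with hg1
  set g2 := deriv g1 with hg2
  set g3 := deriv g2 with hg3
  have h3 : ∀ s, iteratedDeriv 3 G s = g3 s := fun s => by
    simp [iteratedDeriv_succ, iteratedDeriv_zero, hg1, hg2, hg3]
  -- differentiability/continuity facts
  have hG1 : ContDiff ℝ 2 g1 := (contDiff_succ_iff_deriv.mp (by exact_mod_cast hG)).2.2
  have hG2 : ContDiff ℝ 1 g2 := (contDiff_succ_iff_deriv.mp (by exact_mod_cast hG1)).2.2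
  have hdG : Differentiable ℝ G := hG.differentiable (by norm_num)
  have hdG1 : Differentiable ℝ g1 := hG1.differentiable (by norm_num)
  have hdG2 : Differentiable ℝ g2 := hG2.differentiable (by norm_num)
  have hcg1 : Continuous g1 := hdG1.continuous
  have hcg2 : Continuous g2 := hdG2.continuous
  have hcg3 : Continuous g3 := hG2.continuous_deriv le_rfl
  -- level 0 : |g2 y - g2 x| ≤ M |y - x|
  have t0 : ∀ y', |g2 y' - g2 x| ≤ M * |y' - x| := by
    intro y'
    have := taylor_step g2 g3 (fun s => (hdG2 s).hasDerivAt) hcg3 x M 0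
      (fun s => by simpa using (h3 s ▸ hM s)) y'
    simpa using this
  -- level 1 : |g1 y - g1 x - g2 x (y - x)| ≤ M |y - x|²/2
  have t1 : ∀ y', |g1 y' - g1 x - g2 x * (y' - x)| ≤ M * |y' - x| ^ 2 / 2 := by
    intro y'
    have hF : ∀ s, HasDerivAt (fun s => g1 s - g2 x * s) (g2 s - g2 x) s := fun s => by
      have := (hdG1 s).hasDerivAt.sub ((hasDerivAt_id s).const_mul (g2 x))
      exact this.congr_deriv (by simp only [hg2, id_eq, mul_one])
    have key := taylor_step _ _ hF (hcg2.sub continuous_const) x M 1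
      (fun s => by simpa using t0 s) y'
    norm_num at key
    calc |g1 y' - g1 x - g2 x * (y' - x)|
        = |(g1 y' - g2 x * y') - (g1 x - g2 x * x)| := by ring_nf
      _ ≤ M * (y' - x) ^ 2 / 2 := key
      _ = M * |y' - x| ^ 2 / 2 := by rw [sq_abs]
  -- level 2
  have hF : ∀ s, HasDerivAt (fun s => G s - g1 x * s - g2 x * (s - x) ^ 2 / 2)
      (g1 s - g1 x - g2 x * (s - x)) s := fun s => by
    have h1 := (hdG s).hasDerivAt.sub ((hasDerivAt_id s).const_mul (g1 x))
    have h2 : HasDerivAt (fun s : ℝ => g2 x * (s - x) ^ 2 / 2) (g2 x * (s - x)) s := by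
      have := (((hasDerivAt_id s).sub_const x).pow 2).const_mul (g2 x)
      exact (this.div_const 2).congr_deriv (by simp only [id_eq]; push_cast; ring)
    exact (h1.sub h2).congr_deriv (by simp only [← hg1, id_eq, mul_one])
  have hc : Continuous fun s => g1 s - g1 x - g2 x * (s - x) := by continuity
  have key := taylor_step _ _ hF hc x (M/2) 2 (fun s => by
      have := t1 s
      calc |g1 s - g1 x - g2 x * (s - x)| ≤ M * |s - x| ^ 2 / 2 := this
        _ = M / 2 * |s - x| ^ 2 := by ring) y
  norm_num at key
  calc |G y - G x - g1 x * (y - x) - g2 x * (y - x) ^ 2 / 2|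
      = |G y - g1 x * y - g2 x * (y - x) ^ 2 / 2 - (G x - g1 x * x)| := by
        ring_nf
    _ ≤ M / 2 * |y - x| ^ 3 / 3 := key
    _ = M * |y - x| ^ 3 / 6 := by ring


/-- Third-order Taylor bound against the odd Gaussian kernel derivative: for G bounded and
C³ with third derivative bounded by M, |∫ G(t−hz) φ′(z) dz − h G′(t)| ≤ M h³ / 2. -/
theorem taylor_bound_gaussian_derivative (G : ℝ → ℝ)
    (hG_bdd : ∃ B : ℝ, ∀ x : ℝ, |G x| ≤ B)
    (hG_smooth : ContDiff ℝ 3 G)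
    (M : ℝ) (hM : ∀ x : ℝ, |iteratedDeriv 3 G x| ≤ M)
    (t : ℝ) (h : ℝ) (hh : 0 < h) :
    |(∫ z : ℝ, G (t - h * z) * deriv gaussPdf z) - h * deriv G t| ≤ M * h ^ 3 / 2 := by
  obtain ⟨B, hB⟩ := hG_bdd
  have hB0 : 0 ≤ B := le_trans (abs_nonneg _) (hB 0)
  set d : ℝ → ℝ := fun z => -(z * gaussPdf z) with hd
  set g1 : ℝ → ℝ := deriv G with hg1
  set g2 : ℝ → ℝ := deriv g1 with hg2
  set R : ℝ → ℝ := fun z =>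
    G (t - h * z) - G t - g1 t * ((t - h * z) - t) - g2 t * ((t - h * z) - t) ^ 2 / 2 with hR
  have hRbound : ∀ z : ℝ, |R z| ≤ M * h ^ 3 * |z| ^ 3 / 6 := by
    intro z
    have := taylor3_bound G hG_smooth M hM t (t - h * z)
    have he : |(t - h * z) - t| = h * |z| := by
      rw [show (t - h * z) - t = -(h * z) by ring, abs_neg, abs_mul, abs_of_pos hh]
    rw [he] at this
    calc |R z| ≤ M * (h * |z|) ^ 3 / 6 := this
      _ = M * h ^ 3 * |z| ^ 3 / 6 := by ring
  -- integrability
  have int_d : ∀ k : ℕ, Integrable (fun z : ℝ => z ^ k * d z) := by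
    intro k
    refine (integrable_pow_gaussPdf (k+1)).neg.congr (Filter.Eventually.of_forall fun z => ?_)
    simp only [Pi.neg_apply, hd]; ring
  have int_Gd : Integrable (fun z : ℝ => G (t - h * z) * d z) := by
    refine Integrable.mono' ((integrable_pow_gaussPdf 1).abs.const_mul B) ?_
      (Filter.Eventually.of_forall fun z => ?_)
    · exact ((hG_smooth.continuous.comp (by continuity)).mul
        ((continuous_id.mul continuous_gaussPdf).neg)).aestronglyMeasurable
    · calc ‖G (t - h * z) * d z‖ = |G (t - h * z)| * |z ^ 1 * gaussPdf z| := by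
            rw [Real.norm_eq_abs, abs_mul]
            congr 1
            simp only [hd, abs_neg, pow_one]
        _ ≤ B * |z ^ 1 * gaussPdf z| := mul_le_mul_of_nonneg_right (hB _) (abs_nonneg _)
  have I1 : Integrable (fun z : ℝ => G t * d z) := by
    have := (int_d 0).const_mul (G t)
    refine this.congr (Filter.Eventually.of_forall fun z => ?_); simp
  have I2 : Integrable (fun z : ℝ => (h * g1 t) * (z * d z)) := by
    have := (int_d 1).const_mul (h * g1 t)
    refine this.congr (Filter.Eventually.of_forall fun z => ?_); simp
  have I3 : Integrable (fun z : ℝ => (h ^ 2 / 2 * g2 t) * (z ^ 2 * d z)) :=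
    (int_d 2).const_mul _
  -- pointwise identity
  have hptw : ∀ z : ℝ, R z * d z =
      G (t - h * z) * d z - G t * d z + (h * g1 t) * (z * d z)
        - (h ^ 2 / 2 * g2 t) * (z ^ 2 * d z) := by
    intro z; simp only [hR]; ring
  -- moments against d
  have val : ∀ k : ℕ, ∫ z : ℝ, z ^ k * d z = -∫ z : ℝ, z ^ (k+1) * gaussPdf z := by
    intro k
    rw [← integral_neg]
    congr 1; funext z; simp only [hd]; ring
  have val0 : ∫ z : ℝ, d z = 0 := by
    have h0 := val 0
    simp only [pow_zero, one_mul, zero_add] at h0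
    have h1 : ∫ z : ℝ, z ^ 1 * gaussPdf z = 0 := integral_odd_pow_gaussPdf 1 odd_one
    simp only [pow_one] at h0 h1
    rw [h0, h1, neg_zero]
  have val1 : ∫ z : ℝ, z * d z = -1 := by
    have h0 := val 1
    rw [show (1:ℕ)+1 = 2 from rfl] at h0
    simp only [pow_one] at h0
    rw [h0, moment_two]
  have val2 : ∫ z : ℝ, z ^ 2 * d z = 0 := by
    have h0 := val 2
    rw [show (2:ℕ)+1 = 3 from rfl] at h0
    rw [h0, integral_odd_pow_gaussPdf 3 (by decide), neg_zero]
  -- split the integral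
  have key : ∫ z : ℝ, R z * d z = (∫ z : ℝ, G (t - h * z) * d z) - h * g1 t := by
    calc ∫ z : ℝ, R z * d z
        = ∫ z : ℝ, (G (t - h * z) * d z - G t * d z + (h * g1 t) * (z * d z)
            - (h ^ 2 / 2 * g2 t) * (z ^ 2 * d z)) := by simp only [hptw]
      _ = (((∫ z : ℝ, G (t - h * z) * d z) - ∫ z : ℝ, G t * d z)
            + ∫ z : ℝ, (h * g1 t) * (z * d z)) - ∫ z : ℝ, (h ^ 2 / 2 * g2 t) * (z ^ 2 * d z) := by
          have I01 : Integrable (fun z : ℝ => G (t - h * z) * d z - G t * d z) := by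
            refine (int_Gd.sub I1).congr (Filter.Eventually.of_forall fun z => ?_)
            simp only [Pi.sub_apply]
          have I012 : Integrable (fun z : ℝ =>
              G (t - h * z) * d z - G t * d z + (h * g1 t) * (z * d z)) := by
            refine (I01.add I2).congr (Filter.Eventually.of_forall fun z => ?_)
            simp only [Pi.add_apply]
          rw [integral_sub I012 I3, integral_add I01 I2, integral_sub int_Gd I1]
      _ = (∫ z : ℝ, G (t - h * z) * d z) - h * g1 t := by
          rw [integral_const_mul, integral_const_mul, integral_const_mul, val0, val1, val2]
          ring
  -- bound  |∫ R d|
  have hbnd : |∫ z : ℝ, R z * d z| ≤ M * h ^ 3 / 2 := by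
    have intRd : Integrable (fun z : ℝ => R z * d z) := by
      refine (((int_Gd.sub I1).add I2).sub I3).congr (Filter.Eventually.of_forall fun z => ?_)
      simp only [Pi.sub_apply, Pi.add_apply]
      rw [hptw z]
    have hmaj : Integrable (fun z : ℝ => (M * h ^ 3 / 6) * (z ^ 4 * gaussPdf z)) :=
      (integrable_pow_gaussPdf 4).const_mul _
    have hptb : ∀ z : ℝ, ‖R z * d z‖ ≤ (M * h ^ 3 / 6) * (z ^ 4 * gaussPdf z) := by
      intro z
      have habsd : |d z| = |z| * gaussPdf z := by
        rw [hd]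
        simp only [abs_neg, abs_mul]
        rw [abs_of_pos (gaussPdf_pos z)]
      calc ‖R z * d z‖ = |R z| * |d z| := abs_mul _ _
        _ ≤ (M * h ^ 3 * |z| ^ 3 / 6) * (|z| * gaussPdf z) := by
            rw [habsd]
            exact mul_le_mul_of_nonneg_right (hRbound z)
              (mul_nonneg (abs_nonneg _) (gaussPdf_pos z).le)
        _ = (M * h ^ 3 / 6) * (|z| ^ 4 * gaussPdf z) := by ring
        _ = (M * h ^ 3 / 6) * (z ^ 4 * gaussPdf z) := by
            rw [pow_abs, abs_of_nonneg (by positivity : (0:ℝ) ≤ z ^ 4)]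
    have hle := MeasureTheory.norm_integral_le_of_norm_le hmaj
      (Filter.Eventually.of_forall hptb)
    rw [Real.norm_eq_abs] at hle
    calc |∫ z : ℝ, R z * d z| ≤ ∫ z : ℝ, (M * h ^ 3 / 6) * (z ^ 4 * gaussPdf z) := hle
      _ = (M * h ^ 3 / 6) * ∫ z : ℝ, z ^ 4 * gaussPdf z := integral_const_mul _ _
      _ = M * h ^ 3 / 2 := by rw [moment_four]; ring
  -- conclude
  have hgd : (fun z : ℝ => G (t - h * z) * deriv gaussPdf z)
      = fun z : ℝ => G (t - h * z) * d z := by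
    funext z; rw [deriv_gaussPdf]
  rw [hgd, ← key]
  exact hbnd
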